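/- For all integers a ≥ 1 and k ≥ 0: ∑_{s=0}^{a} (−q)^s·[a choose s]·[β−s−k choose a] = q^{−β+k+a}·∑_{s=0}^{a−1} (−q)^s·[a−1 choose s]·[β−s−k−1 choose a−1], where β−s−k denotes the weight 1·β + (−s−k) and q^{−β+k+a} = Q^{−1}·q^{k+a}. -/

import Mathlib

noncomputable section

variable {F : Type*}

/-- `q^x` for the formal weight `x = c·β + n`, where `Q` plays the role of `q^β`. -/
def qpow [Field F] (q Q : F) (c n : ℤ) : F := Q ^ c * q ^ n

/-- The quantum number `[x]` for the formal weight `x = c·β + n`. -/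
def qnum [Field F] (q Q : F) (c n : ℤ) : F :=
  (qpow q Q c n - qpow q Q (-c) (-n)) / (q - q⁻¹)

/-- The quantum binomial `[x choose k]` for the formal weight `x = c·β + n`. -/
def qbinom [Field F] (q Q : F) (c n : ℤ) (k : ℕ) : F :=
  (∏ i ∈ Finset.range k, qnum q Q c (n - (i : ℤ))) /
    ∏ i ∈ Finset.range k, qnum q Q 0 ((i : ℤ) + 1)

section Aux

variable [Field F] (q Q : F) (hq : q ≠ 0) (hroot : ∀ j : ℕ, j ≠ 0 → q ^ j ≠ 1)

include hq hroot in
lemma hd_aux : q - q⁻¹ ≠ 0 := by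
  intro h
  have h1 : q = q⁻¹ := sub_eq_zero.mp h
  have h2 : q ^ 2 = 1 := by
    rw [sq]; nth_rewrite 2 [h1]; exact mul_inv_cancel₀ hq
  exact hroot 2 (by norm_num) h2

lemma qnum0 (n : ℤ) : qnum q Q 0 n = (q ^ n - q ^ (-n)) / (q - q⁻¹) := by
  simp [qnum, qpow]

include hq hroot in
lemma qnum0_ne (n : ℕ) (hn : n ≠ 0) : qnum q Q 0 (n : ℤ) ≠ 0 := by
  rw [qnum0]
  apply div_ne_zero _ (hd_aux q hq hroot)
  intro h
  have h1 : q ^ (n : ℤ) = q ^ (-(n : ℤ)) := sub_eq_zero.mp h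
  have h2 : q ^ (2 * n) = 1 := by
    have := congrArg (· * q ^ (n : ℤ)) h1
    simp only [← zpow_add₀ hq, neg_add_cancel, zpow_zero] at this
    rw [← zpow_natCast q (2*n)]
    push_cast
    rw [two_mul]
    exact this
  exact hroot (2 * n) (by omega) h2

include hq hroot in
lemma qfact_ne (k : ℕ) : (∏ i ∈ Finset.range k, qnum q Q 0 ((i : ℤ) + 1)) ≠ 0 := by
  rw [Finset.prod_ne_zero_iff]
  intro i _
  have : ((i : ℤ) + 1) = ((i + 1 : ℕ) : ℤ) := by push_cast; ring
  rw [this]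
  exact qnum0_ne q Q hq hroot (i + 1) (by omega)

lemma qbinom_zero (c n : ℤ) : qbinom q Q c n 0 = 1 := by simp [qbinom]

lemma qnum_zero_zero : qnum q Q 0 0 = 0 := by simp [qnum]

lemma qbinom_nat_top_succ (a : ℕ) : qbinom q Q 0 (a : ℤ) (a + 1) = 0 := by
  rw [qbinom]
  apply div_eq_zero_iff.mpr
  left
  apply Finset.prod_eq_zero (Finset.self_mem_range_succ a)
  simp [qnum_zero_zero]

end Aux

section Pascal

variable [Field F] (q Q : F) (hq : q ≠ 0) (hroot : ∀ j : ℕ, j ≠ 0 → q ^ j ≠ 1)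

include hq in
lemma qnum_key (a t : ℕ) :
    qnum q Q 0 ((a : ℤ) + 1)
      = q ^ ((t : ℤ) + 1) * qnum q Q 0 ((a : ℤ) - t) + q ^ ((t : ℤ) - a) * qnum q Q 0 ((t : ℤ) + 1) := by
  have hd : q - q⁻¹ ≠ 0 ∨ True := Or.inr trivial
  simp only [qnum0]
  rw [mul_div_assoc', mul_div_assoc', ← add_div]
  congr 1
  simp only [neg_add, neg_sub, zpow_add₀ hq, zpow_sub₀ hq, zpow_neg, zpow_one, zpow_natCast]
  have hA : q ^ a ≠ 0 := pow_ne_zero _ hq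
  have hT : q ^ t ≠ 0 := pow_ne_zero _ hq
  set A := q ^ a
  set T := q ^ t
  field_simp
  ring

include hq hroot in
lemma pascal (a t : ℕ) :
    qbinom q Q 0 ((a : ℤ) + 1) (t + 1)
      = q ^ ((t : ℤ) + 1) * qbinom q Q 0 (a : ℤ) (t + 1)
        + q ^ ((t : ℤ) - (a : ℤ)) * qbinom q Q 0 (a : ℤ) t := by
  have hd := hd_aux q hq hroot
  have hFt := qfact_ne q Q hq hroot t
  have htp1 : qnum q Q 0 ((t : ℤ) + 1) ≠ 0 := by
    have h : ((t : ℤ) + 1) = ((t + 1 : ℕ) : ℤ) := by push_cast; ring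
    rw [h]; exact qnum0_ne q Q hq hroot _ (by omega)
  simp only [qbinom]
  rw [Finset.prod_range_succ (fun i => qnum q Q 0 ((i : ℤ) + 1)) t]
  rw [Finset.prod_range_succ (fun i => qnum q Q 0 ((a : ℤ) - (i : ℤ))) t]
  rw [Finset.prod_range_succ' (fun i => qnum q Q 0 ((a : ℤ) + 1 - (i : ℤ))) t]
  have hsh : ∀ i ∈ Finset.range t,
      qnum q Q 0 ((a : ℤ) + 1 - ((i + 1 : ℕ) : ℤ)) = qnum q Q 0 ((a : ℤ) - (i : ℤ)) := by
    intro i _; congr 1; push_cast; ring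
  rw [Finset.prod_congr rfl hsh]
  norm_num
  rw [qnum_key q Q hq a t]
  field_simp

end Pascal

section PidSec

variable [Field F] (q Q : F) (hq : q ≠ 0) (hroot : ∀ j : ℕ, j ≠ 0 → q ^ j ≠ 1)

include hq hroot in
lemma Pid (a : ℕ) (x : F) :
    ∑ s ∈ Finset.range (a + 1), (-1 : F) ^ s * qbinom q Q 0 (a : ℤ) s * x ^ s
      = ∏ i ∈ Finset.range a, (1 - x * q ^ ((a : ℤ) - 1 - i - i)) := by
  induction a generalizing x with
  | zero => simp [qbinom]
  | succ a ih =>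
    rw [Finset.sum_range_succ' (fun s => (-1 : F) ^ s * qbinom q Q 0 ((a + 1 : ℕ) : ℤ) s * x ^ s) (a + 1)]
    have hterm : ∀ s ∈ Finset.range (a + 1),
        (-1 : F) ^ (s + 1) * qbinom q Q 0 ((a + 1 : ℕ) : ℤ) (s + 1) * x ^ (s + 1)
          = (-1 : F) ^ (s + 1) * qbinom q Q 0 (a : ℤ) (s + 1) * (q * x) ^ (s + 1)
            + (-(q ^ (-(a : ℤ)) * x)) * ((-1 : F) ^ s * qbinom q Q 0 (a : ℤ) s * (q * x) ^ s) := by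
      intro s _
      have hc : ((a + 1 : ℕ) : ℤ) = (a : ℤ) + 1 := by push_cast; ring
      rw [hc, pascal q Q hq hroot a s]
      have h1 : q ^ ((s : ℤ) + 1) = q ^ (s + 1) := by
        rw [show ((s : ℤ) + 1) = ((s + 1 : ℕ) : ℤ) by push_cast; ring, zpow_natCast]
      have h2 : q ^ ((s : ℤ) - (a : ℤ)) = q ^ s * q ^ (-(a : ℤ)) := by
        rw [sub_eq_add_neg, zpow_add₀ hq, zpow_natCast]
      rw [h1, h2, mul_pow, mul_pow]
      ring
    rw [Finset.sum_congr rfl hterm, Finset.sum_add_distrib, ← Finset.mul_sum]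
    have hA : ∑ s ∈ Finset.range (a + 1),
        (-1 : F) ^ (s + 1) * qbinom q Q 0 (a : ℤ) (s + 1) * (q * x) ^ (s + 1)
        = (∑ s ∈ Finset.range (a + 1), (-1 : F) ^ s * qbinom q Q 0 (a : ℤ) s * (q * x) ^ s) - 1 := by
      have := Finset.sum_range_succ' (fun s => (-1 : F) ^ s * qbinom q Q 0 (a : ℤ) s * (q * x) ^ s) (a + 1)
      rw [Finset.sum_range_succ (fun s => (-1 : F) ^ s * qbinom q Q 0 (a : ℤ) s * (q * x) ^ s) (a + 1)]
        at this
      rw [qbinom_nat_top_succ] at this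
      simp only [qbinom_zero, pow_zero, mul_one, one_mul, mul_zero, zero_mul, add_zero] at this
      rw [this]; ring
    rw [hA, ih (q * x)]
    simp only [qbinom_zero, pow_zero, mul_one, one_mul]
    rw [Finset.prod_range_succ (fun i => (1 - x * q ^ (((a + 1 : ℕ) : ℤ) - 1 - i - i))) a]
    have hfac : ∀ i ∈ Finset.range a,
        (1 - q * x * q ^ ((a : ℤ) - 1 - i - i)) = (1 - x * q ^ (((a + 1 : ℕ) : ℤ) - 1 - i - i)) := by
      intro i _
      have : q * q ^ ((a : ℤ) - 1 - i - i) = q ^ (((a + 1 : ℕ) : ℤ) - 1 - i - i) := by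
        nth_rewrite 1 [← zpow_one q]
        rw [← zpow_add₀ hq]; congr 1; push_cast; ring
      rw [← this]; ring
    rw [← Finset.prod_congr rfl hfac]
    have hlast : (1 - x * q ^ (((a + 1 : ℕ) : ℤ) - 1 - a - a)) = 1 - q ^ (-(a : ℤ)) * x := by
      have : (((a + 1 : ℕ) : ℤ) - 1 - a - a) = -(a : ℤ) := by push_cast; ring
      rw [this]; ring
    rw [hlast]
    ring

end PidSec

section KeySec

variable [Field F] (q Q : F) (hq : q ≠ 0) (hQ : Q ≠ 0)
  (hroot : ∀ j : ℕ, j ≠ 0 → q ^ j ≠ 1)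

include hq hroot in
lemma qb_self (a : ℕ) : qbinom q Q 0 (a : ℤ) a = 1 := by
  rw [qbinom]
  have h : ∏ i ∈ Finset.range a, qnum q Q 0 ((a : ℤ) - i)
      = ∏ i ∈ Finset.range a, qnum q Q 0 ((i : ℤ) + 1) := by
    rw [← Finset.prod_range_reflect (fun i => qnum q Q 0 ((i : ℤ) + 1)) a]
    apply Finset.prod_congr rfl
    intro i hi
    rw [Finset.mem_range] at hi
    congr 1
    omega
  rw [h, div_self (qfact_ne q Q hq hroot a)]

lemma scalar_sj (s j a : ℕ) (W A : F) :
    (-q) ^ s * (W * q ^ (-(s : ℤ))) ^ a * (((W * q ^ (-(s : ℤ)))⁻¹) ^ 2 * A) ^ j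
      = W ^ a * ((W⁻¹) ^ 2) ^ j * A ^ j
          * ((-1 : F) ^ s * (q * (q⁻¹) ^ a * (q ^ (2 * j))) ^ s) := by
  have h1 : q ^ (-(s : ℤ)) = (q⁻¹) ^ s := by rw [zpow_neg, zpow_natCast, inv_pow]
  have h2 : (W * (q⁻¹) ^ s)⁻¹ = W⁻¹ * q ^ s := by
    rw [mul_inv, ← inv_pow, inv_inv]
  rw [h1, h2, neg_pow]
  ring

include hq hQ hroot in
lemma keyS (a : ℕ) (m : ℤ) :
    ∑ s ∈ Finset.range (a + 1),
        (-q) ^ s * qbinom q Q 0 (a : ℤ) s * qbinom q Q 1 (m - (s : ℤ)) a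
      = (Q⁻¹) ^ a * (q ^ ((a : ℤ) - m)) ^ a := by
  have hd := hd_aux q hq hroot
  have hda : (q - q⁻¹) ^ a ≠ 0 := pow_ne_zero _ hd
  have hFa := qfact_ne q Q hq hroot a
  set W : F := Q * q ^ m with hWdef
  have hW : W ≠ 0 := mul_ne_zero hQ (zpow_ne_zero _ hq)
  set G : F := ∏ i ∈ Finset.range a, q ^ (-(i : ℤ)) with hGdef
  set C : F := ∏ i ∈ Finset.range a, -(q ^ (-((i : ℤ) + 1))) with hCdef
  set E : F := ∏ i ∈ Finset.range a, (1 - q ^ (2 * (a - i))) with hEdef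
  have hE : E ≠ 0 := by
    rw [hEdef, Finset.prod_ne_zero_iff]
    intro i hi
    rw [Finset.mem_range] at hi
    exact sub_ne_zero.mpr (Ne.symm (hroot (2 * (a - i)) (by omega)))
  have hC : C ≠ 0 := by
    rw [hCdef, Finset.prod_ne_zero_iff]
    intro i _
    exact neg_ne_zero.mpr (zpow_ne_zero _ hq)
  -- step 1: per-s product expansion
  have hNs : ∀ s : ℕ,
      (q - q⁻¹) ^ a * ∏ i ∈ Finset.range a, qnum q Q 1 (m - (s : ℤ) - (i : ℤ))
        = G * (W * q ^ (-(s : ℤ))) ^ a *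
            ∑ j ∈ Finset.range (a + 1), (-1 : F) ^ j * qbinom q Q 0 (a : ℤ) j *
              (((W * q ^ (-(s : ℤ)))⁻¹) ^ 2 * q ^ ((a : ℤ) - 1)) ^ j := by
    intro s
    have hws : W * q ^ (-(s : ℤ)) ≠ 0 := mul_ne_zero hW (zpow_ne_zero _ hq)
    have h1 : (q - q⁻¹) ^ a * ∏ i ∈ Finset.range a, qnum q Q 1 (m - (s : ℤ) - (i : ℤ))
        = ∏ i ∈ Finset.range a,
            (q ^ (-(i : ℤ)) * (W * q ^ (-(s : ℤ))) *
              (1 - ((W * q ^ (-(s : ℤ)))⁻¹) ^ 2 * q ^ ((i : ℤ) + (i : ℤ)))) := by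
      rw [show (q - q⁻¹) ^ a = ∏ _i ∈ Finset.range a, (q - q⁻¹) by
        rw [Finset.prod_const, Finset.card_range], ← Finset.prod_mul_distrib]
      apply Finset.prod_congr rfl
      intro i _
      rw [qnum, mul_div_cancel₀ _ hd]
      simp only [qpow, hWdef, zpow_one, zpow_neg, zpow_sub₀ hq, zpow_add₀ hq, zpow_natCast,
        mul_inv, inv_inv, neg_sub]
      have hM : q ^ m ≠ 0 := zpow_ne_zero _ hq
      have hS : q ^ s ≠ 0 := pow_ne_zero _ hq
      have hI : q ^ i ≠ 0 := pow_ne_zero _ hq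
      field_simp
    rw [h1, Finset.prod_mul_distrib, Finset.prod_mul_distrib, Finset.prod_const,
      Finset.card_range, ← hGdef]
    congr 1
    rw [← Finset.prod_range_reflect
      (fun i => 1 - ((W * q ^ (-(s : ℤ)))⁻¹) ^ 2 * q ^ ((i : ℤ) + (i : ℤ))) a]
    rw [Pid q Q hq hroot a (((W * q ^ (-(s : ℤ)))⁻¹) ^ 2 * q ^ ((a : ℤ) - 1))]
    apply Finset.prod_congr rfl
    intro i hi
    rw [Finset.mem_range] at hi
    have h2 : q ^ (((a - 1 - i : ℕ) : ℤ) + ((a - 1 - i : ℕ) : ℤ))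
        = q ^ ((a : ℤ) - 1) * q ^ ((a : ℤ) - 1 - i - i) := by
      rw [← zpow_add₀ hq]; congr 1; omega
    rw [h2]; ring
  -- step 2: assemble
  have hsplit : ∀ s : ℕ, qbinom q Q 1 (m - (s : ℤ)) a
      = (∏ i ∈ Finset.range a, qnum q Q 1 (m - (s : ℤ) - (i : ℤ))) /
          ∏ i ∈ Finset.range a, qnum q Q 0 ((i : ℤ) + 1) := fun s => rfl
  have hLHS : ∑ s ∈ Finset.range (a + 1),
      (-q) ^ s * qbinom q Q 0 (a : ℤ) s * qbinom q Q 1 (m - (s : ℤ)) a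
      = (∑ s ∈ Finset.range (a + 1), (-q) ^ s * qbinom q Q 0 (a : ℤ) s *
          ∏ i ∈ Finset.range a, qnum q Q 1 (m - (s : ℤ) - (i : ℤ))) /
         ∏ i ∈ Finset.range a, qnum q Q 0 ((i : ℤ) + 1) := by
    rw [Finset.sum_div]
    apply Finset.sum_congr rfl
    intro s _
    rw [hsplit s, mul_div_assoc]
  rw [hLHS, div_eq_iff hFa]
  apply mul_left_cancel₀ hda
  rw [Finset.mul_sum]
  have hterm : ∀ s ∈ Finset.range (a + 1),
      (q - q⁻¹) ^ a * ((-q) ^ s * qbinom q Q 0 (a : ℤ) s *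
          ∏ i ∈ Finset.range a, qnum q Q 1 (m - (s : ℤ) - (i : ℤ)))
        = ∑ j ∈ Finset.range (a + 1),
            (G * ((-1 : F) ^ j * qbinom q Q 0 (a : ℤ) j * (W ^ a * ((W⁻¹) ^ 2) ^ j *
              (q ^ ((a : ℤ) - 1)) ^ j))) *
              ((-1 : F) ^ s * qbinom q Q 0 (a : ℤ) s * (q * (q⁻¹) ^ a * (q ^ (2 * j))) ^ s) := by
    intro s _
    calc (q - q⁻¹) ^ a * ((-q) ^ s * qbinom q Q 0 (a : ℤ) s *
          ∏ i ∈ Finset.range a, qnum q Q 1 (m - (s : ℤ) - (i : ℤ)))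
        = (-q) ^ s * qbinom q Q 0 (a : ℤ) s *
            ((q - q⁻¹) ^ a * ∏ i ∈ Finset.range a, qnum q Q 1 (m - (s : ℤ) - (i : ℤ))) := by
          ring
      _ = (-q) ^ s * qbinom q Q 0 (a : ℤ) s *
            (G * (W * q ^ (-(s : ℤ))) ^ a *
              ∑ j ∈ Finset.range (a + 1), (-1 : F) ^ j * qbinom q Q 0 (a : ℤ) j *
                (((W * q ^ (-(s : ℤ)))⁻¹) ^ 2 * q ^ ((a : ℤ) - 1)) ^ j) := by rw [hNs s]
      _ = ∑ j ∈ Finset.range (a + 1),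
            (-q) ^ s * qbinom q Q 0 (a : ℤ) s *
              (G * (W * q ^ (-(s : ℤ))) ^ a *
                ((-1 : F) ^ j * qbinom q Q 0 (a : ℤ) j *
                  (((W * q ^ (-(s : ℤ)))⁻¹) ^ 2 * q ^ ((a : ℤ) - 1)) ^ j)) := by
          rw [Finset.mul_sum, Finset.mul_sum]
      _ = _ := by
          apply Finset.sum_congr rfl
          intro j _
          have hsj := scalar_sj q s j a W (q ^ ((a : ℤ) - 1))
          calc (-q) ^ s * qbinom q Q 0 (a : ℤ) s *
                (G * (W * q ^ (-(s : ℤ))) ^ a *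
                  ((-1 : F) ^ j * qbinom q Q 0 (a : ℤ) j *
                    (((W * q ^ (-(s : ℤ)))⁻¹) ^ 2 * q ^ ((a : ℤ) - 1)) ^ j))
              = (G * ((-1 : F) ^ j * qbinom q Q 0 (a : ℤ) j)) * qbinom q Q 0 (a : ℤ) s *
                  ((-q) ^ s * (W * q ^ (-(s : ℤ))) ^ a *
                    (((W * q ^ (-(s : ℤ)))⁻¹) ^ 2 * q ^ ((a : ℤ) - 1)) ^ j) := by ring
            _ = _ := by rw [hsj]; ring
  rw [Finset.sum_congr rfl hterm, Finset.sum_comm]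
  have hinner : ∀ j ∈ Finset.range (a + 1),
      ∑ s ∈ Finset.range (a + 1),
          (G * ((-1 : F) ^ j * qbinom q Q 0 (a : ℤ) j * (W ^ a * ((W⁻¹) ^ 2) ^ j *
            (q ^ ((a : ℤ) - 1)) ^ j))) *
            ((-1 : F) ^ s * qbinom q Q 0 (a : ℤ) s * (q * (q⁻¹) ^ a * (q ^ (2 * j))) ^ s)
        = (G * ((-1 : F) ^ j * qbinom q Q 0 (a : ℤ) j * (W ^ a * ((W⁻¹) ^ 2) ^ j *
            (q ^ ((a : ℤ) - 1)) ^ j))) *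
            ∏ i ∈ Finset.range a,
              (1 - (q * (q⁻¹) ^ a * (q ^ (2 * j))) * q ^ ((a : ℤ) - 1 - i - i)) := by
    intro j _
    rw [← Finset.mul_sum, Pid q Q hq hroot a (q * (q⁻¹) ^ a * (q ^ (2 * j)))]
  rw [Finset.sum_congr rfl hinner]
  rw [Finset.sum_eq_single_of_mem a (Finset.self_mem_range_succ a)]
  · -- the j = a term
    rw [qb_self q Q hq hroot a]
    have hPdE : ∏ i ∈ Finset.range a,
        (1 - (q * (q⁻¹) ^ a * (q ^ (2 * a))) * q ^ ((a : ℤ) - 1 - i - i)) = E := by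
      rw [hEdef]
      apply Finset.prod_congr rfl
      intro i hi
      rw [Finset.mem_range] at hi
      congr 1
      rw [show 2 * (a - i) = 2 * a - 2 * i by omega, pow_sub₀ q hq (by omega : 2 * i ≤ 2 * a)]
      rw [inv_pow]
      simp only [zpow_sub₀ hq, zpow_natCast, zpow_one]
      field_simp
      ring
    rw [hPdE]
    have hDfact : (∏ i ∈ Finset.range a, qnum q Q 0 ((i : ℤ) + 1)) * (q - q⁻¹) ^ a = C * E := by
      rw [show (q - q⁻¹) ^ a = ∏ _i ∈ Finset.range a, (q - q⁻¹) by
        rw [Finset.prod_const, Finset.card_range], ← Finset.prod_mul_distrib]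
      have hf : ∀ i ∈ Finset.range a,
          qnum q Q 0 ((i : ℤ) + 1) * (q - q⁻¹)
            = -(q ^ (-((i : ℤ) + 1))) * (1 - q ^ (2 * (i + 1))) := by
        intro i _
        rw [qnum0, div_mul_cancel₀ _ hd]
        simp only [zpow_neg, zpow_add₀ hq, zpow_natCast, zpow_one]
        have hI : q ^ i ≠ 0 := pow_ne_zero _ hq
        field_simp
        ring
      rw [Finset.prod_congr rfl hf, Finset.prod_mul_distrib, ← hCdef]
      congr 1
      rw [hEdef, ← Finset.prod_range_reflect (fun i => 1 - q ^ (2 * (i + 1))) a]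
      apply Finset.prod_congr rfl
      intro i hi
      rw [Finset.mem_range] at hi
      congr 2
      omega
    have hGC : G = (-q) ^ a * C := by
      rw [hGdef, hCdef, show ((-q) ^ a : F) = ∏ _i ∈ Finset.range a, (-q) by
        rw [Finset.prod_const, Finset.card_range], ← Finset.prod_mul_distrib]
      apply Finset.prod_congr rfl
      intro i _
      rw [neg_mul_neg]
      simp only [zpow_neg, zpow_add₀ hq, zpow_natCast, zpow_one]
      have hI : q ^ i ≠ 0 := pow_ne_zero _ hq
      field_simp
    have hbase : q * (W * (W⁻¹) ^ 2 * q ^ ((a : ℤ) - 1)) = Q⁻¹ * q ^ ((a : ℤ) - m) := by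
      rw [hWdef]
      simp only [mul_inv, zpow_sub₀ hq, zpow_neg, zpow_natCast, zpow_one]
      have hM : q ^ m ≠ 0 := zpow_ne_zero _ hq
      have hA : q ^ (a : ℤ) ≠ 0 := zpow_ne_zero _ hq
      field_simp
    have hq4 : (-q) ^ a * (-1 : F) ^ a = q ^ a := by rw [← mul_pow]; norm_num
    have hM : q ^ a * (W ^ a * ((W⁻¹) ^ 2) ^ a * (q ^ ((a : ℤ) - 1)) ^ a)
        = (Q⁻¹) ^ a * (q ^ ((a : ℤ) - m)) ^ a := by
      rw [← mul_pow, ← mul_pow, ← mul_pow, hbase, mul_pow]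
    rw [hGC]
    conv_rhs => rw [mul_comm, mul_assoc, hDfact]
    calc (-q) ^ a * C *
          ((-1 : F) ^ a * 1 * (W ^ a * ((W⁻¹) ^ 2) ^ a * (q ^ ((a : ℤ) - 1)) ^ a)) * E
        = ((-q) ^ a * (-1 : F) ^ a) *
            (W ^ a * ((W⁻¹) ^ 2) ^ a * (q ^ ((a : ℤ) - 1)) ^ a) * (C * E) := by ring
      _ = q ^ a * (W ^ a * ((W⁻¹) ^ 2) ^ a * (q ^ ((a : ℤ) - 1)) ^ a) * (C * E) := by rw [hq4]
      _ = (Q⁻¹) ^ a * (q ^ ((a : ℤ) - m)) ^ a * (C * E) := by rw [hM]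
  · -- vanishing terms j < a
    intro j hj hja
    rw [Finset.mem_range] at hj
    have hjlt : j < a := by omega
    have hzero : ∏ i ∈ Finset.range a,
        (1 - (q * (q⁻¹) ^ a * (q ^ (2 * j))) * q ^ ((a : ℤ) - 1 - i - i)) = 0 := by
      apply Finset.prod_eq_zero (Finset.mem_range.mpr hjlt)
      rw [sub_eq_zero]
      rw [inv_pow]
      simp only [zpow_sub₀ hq, zpow_natCast, zpow_one]
      have hI : q ^ j ≠ 0 := pow_ne_zero _ hq
      have hA : q ^ a ≠ 0 := pow_ne_zero _ hq
      field_simp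
      ring
    rw [hzero, mul_zero]

end KeySec

/-- Equation (5.52) (key lemma for the curl computation): for integers `a ≥ 1`, `k ≥ 0`,
`∑_{s=0}^{a} (−q)^s·[a choose s]·[β−s−k choose a]
  = q^{−β+k+a}·∑_{s=0}^{a−1} (−q)^s·[a−1 choose s]·[β−s−k−1 choose a−1]`. -/
theorem stmt16 [Field F] (q Q : F) (hq : q ≠ 0) (hQ : Q ≠ 0)
    (hroot : ∀ j : ℕ, j ≠ 0 → q ^ j ≠ 1) (a k : ℕ) (ha : 1 ≤ a) :
    ∑ s ∈ Finset.range (a + 1),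
        (-q) ^ s * qbinom q Q 0 (a : ℤ) s * qbinom q Q 1 (-(s : ℤ) - (k : ℤ)) a =
      qpow q Q (-1) ((k : ℤ) + (a : ℤ)) *
        ∑ s ∈ Finset.range a,
          (-q) ^ s * qbinom q Q 0 ((a : ℤ) - 1) s *
            qbinom q Q 1 (-(s : ℤ) - (k : ℤ) - 1) (a - 1) := by
  obtain ⟨b, rfl⟩ : ∃ b, a = b + 1 := ⟨a - 1, by omega⟩
  have h1 : ∀ s ∈ Finset.range (b + 1 + 1),
      (-q) ^ s * qbinom q Q 0 ((b + 1 : ℕ) : ℤ) s * qbinom q Q 1 (-(s : ℤ) - (k : ℤ)) (b + 1)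
        = (-q) ^ s * qbinom q Q 0 ((b + 1 : ℕ) : ℤ) s *
            qbinom q Q 1 ((-(k : ℤ)) - (s : ℤ)) (b + 1) := by
    intro s _
    rw [show (-(s : ℤ) - (k : ℤ)) = ((-(k : ℤ)) - (s : ℤ)) by ring]
  rw [Finset.sum_congr rfl h1, keyS q Q hq hQ hroot (b + 1) (-(k : ℤ))]
  have h2 : ∀ s ∈ Finset.range (b + 1),
      (-q) ^ s * qbinom q Q 0 (((b + 1 : ℕ) : ℤ) - 1) s *
          qbinom q Q 1 (-(s : ℤ) - (k : ℤ) - 1) (b + 1 - 1)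
        = (-q) ^ s * qbinom q Q 0 ((b : ℕ) : ℤ) s *
            qbinom q Q 1 ((-(k : ℤ) - 1) - (s : ℤ)) b := by
    intro s _
    rw [show (((b + 1 : ℕ) : ℤ) - 1) = ((b : ℕ) : ℤ) by push_cast; ring,
      show (-(s : ℤ) - (k : ℤ) - 1) = ((-(k : ℤ) - 1) - (s : ℤ)) by ring,
      show b + 1 - 1 = b from rfl]
  rw [Finset.sum_congr rfl h2, keyS q Q hq hQ hroot b (-(k : ℤ) - 1)]
  rw [show ((((b + 1 : ℕ)) : ℤ) - (-(k : ℤ))) = ((b : ℤ) + k + 1) by push_cast; ring,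
    show ((b : ℤ) - (-(k : ℤ) - 1)) = ((b : ℤ) + k + 1) by ring,
    show ((k : ℤ) + (((b + 1 : ℕ)) : ℤ)) = ((b : ℤ) + k + 1) by push_cast; ring]
  rw [qpow, pow_succ, pow_succ]
  simp only [zpow_neg, zpow_one]
  ring
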